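/- With G(Q) as above, the linear map τ defined by τ(e_{ρ_i i, ρ_j j}) = (−1)^{1−δ_{ij}} e_{−ρ_j j, −ρ_i i} is an anti-involution of the associative algebra G(Q), i.e., τ(xy) = τ(y)τ(x) for all x, y and τ² = Id. -/

import Mathlib

open Finset

/-- An index `(ρ_i i, ρ_j j)` with signs `ρ, σ ∈ {±1}` and `i, j ∈ {1,…,N}`. -/
structure GIdx (N : ℕ) where
  ρ : ℤˣ
  i : Fin N
  σ : ℤˣ
  j : Fin N

/-- The weight `ρ_i ε_i - ρ_j ε_j ∈ ℤ^N` of an index. -/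
def wt {N : ℕ} (p : GIdx N) : Fin N → ℤ :=
  Pi.single p.i (p.ρ : ℤ) - Pi.single p.j (p.σ : ℤ)

/-- The standard bilinear form on `ℤ^N`. -/
def form {N : ℕ} (α β : Fin N → ℤ) : ℤ := ∑ k, α k * β k

/-- The index set `J = {(ρ_i i, ρ_j j) : ρ_i ε_i - ρ_j ε_j ∈ Q}`. -/
def JSet (N : ℕ) (Q : AddSubgroup (Fin N → ℤ)) := {p : GIdx N // wt p ∈ Q}

/-- The vector space `G(Q)` with basis indexed by `J`. -/
abbrev GAlg (N : ℕ) (Q : AddSubgroup (Fin N → ℤ)) := JSet N Q →₀ ℂ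

/-- Product of two basis elements of `G(Q)`. -/
noncomputable def mulBasis {N : ℕ} {Q : AddSubgroup (Fin N → ℤ)}
    (ε : (Fin N → ℤ) → (Fin N → ℤ) → ℂ) (a b : JSet N Q) : GAlg N Q :=
  if h : a.1.σ = b.1.ρ ∧ a.1.j = b.1.i then
    ε (wt a.1) (wt b.1) •
      Finsupp.single
        ⟨⟨a.1.ρ, a.1.i, b.1.σ, b.1.j⟩, by
          have hw : wt (⟨a.1.ρ, a.1.i, b.1.σ, b.1.j⟩ : GIdx N) = wt a.1 + wt b.1 := by
            simp only [wt, h.1, h.2]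
            abel
          rw [hw]; exact Q.add_mem a.2 b.2⟩ 1
  else 0

/-- Bilinear extension of the basis product to all of `G(Q)`. -/
noncomputable def gMul {N : ℕ} {Q : AddSubgroup (Fin N → ℤ)}
    (ε : (Fin N → ℤ) → (Fin N → ℤ) → ℂ) (x y : GAlg N Q) : GAlg N Q :=
  x.sum fun a ca => y.sum fun b cb => (ca * cb) • mulBasis ε a b

/-- The linear map `τ` with `τ(e_{ρ_i i, ρ_j j}) = (-1)^{1-δ_{ij}} e_{-ρ_j j, -ρ_i i}`. -/
noncomputable def gTau {N : ℕ} {Q : AddSubgroup (Fin N → ℤ)} (x : GAlg N Q) : GAlg N Q :=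
  x.sum fun a c =>
    (c * (if a.1.i = a.1.j then 1 else -1)) •
      Finsupp.single
        ⟨⟨-a.1.σ, a.1.j, -a.1.ρ, a.1.i⟩, by
          have hw : wt (⟨-a.1.σ, a.1.j, -a.1.ρ, a.1.i⟩ : GIdx N) = wt a.1 := by
            simp only [wt, Units.val_neg, Pi.single_neg]
            abel
          rw [hw]; exact a.2⟩ 1


lemma form_single {N : ℕ} (i j : Fin N) (r s : ℤ) :
    form (Pi.single i r) (Pi.single j s) = if i = j then r * s else 0 := by
  simp [form, Pi.single_apply, ite_and, mul_ite, ite_mul, Finset.sum_ite_eq']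
  split <;> simp_all [eq_comm]

lemma form_wt {N : ℕ} (a b : GIdx N) :
    form (wt a) (wt b) =
      (if a.i = b.i then ((a.ρ:ℤ)*b.ρ) else 0) - (if a.i = b.j then ((a.ρ:ℤ)*b.σ) else 0)
      - (if a.j = b.i then ((a.σ:ℤ)*b.ρ) else 0) + (if a.j = b.j then ((a.σ:ℤ)*b.σ) else 0) := by
  have h : ∀ (α β γ δ : Fin N → ℤ), form (α - β) (γ - δ)
      = form α γ - form α δ - form β γ + form β δ := by
    intro α β γ δ
    simp [form, sub_mul, mul_sub, Finset.sum_sub_distrib]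
    ring
  rw [wt, wt, h, form_single, form_single, form_single, form_single]

lemma sign_id {N : ℕ} (a b : GIdx N) (h1 : a.σ = b.ρ) (h2 : a.j = b.i) :
    (-1:ℂ) ^ form (wt a) (wt b) * (if a.i = b.j then (1:ℂ) else -1)
      = (if a.i = a.j then (1:ℂ) else -1) * (if b.i = b.j then (1:ℂ) else -1) := by
  rw [form_wt, ← h1, ← h2]
  clear h1 h2
  rcases Int.units_eq_one_or a.ρ with h3 | h3 <;>
  rcases Int.units_eq_one_or a.σ with h4 | h4 <;>
  rcases Int.units_eq_one_or b.σ with h5 | h5 <;>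
  by_cases e1 : a.i = a.j <;> by_cases e2 : a.i = b.j <;> by_cases e3 : a.j = b.j <;>
  simp_all <;> norm_num

/-- The sign `(-1)^{1-δ_{ij}}` of an index. -/
noncomputable def sgn {N : ℕ} {Q : AddSubgroup (Fin N → ℤ)} (a : JSet N Q) : ℂ :=
  if a.1.i = a.1.j then 1 else -1

lemma sgn_mul_self {N : ℕ} {Q : AddSubgroup (Fin N → ℤ)} (a : JSet N Q) :
    sgn a * sgn a = 1 := by
  unfold sgn; split <;> norm_num

/-- `τ` on basis indices. -/
def tauIdx {N : ℕ} {Q : AddSubgroup (Fin N → ℤ)} (a : JSet N Q) : JSet N Q :=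
  ⟨⟨-a.1.σ, a.1.j, -a.1.ρ, a.1.i⟩, by
    have hw : wt (⟨-a.1.σ, a.1.j, -a.1.ρ, a.1.i⟩ : GIdx N) = wt a.1 := by
      simp only [wt, Units.val_neg, Pi.single_neg]
      abel
    rw [hw]; exact a.2⟩

lemma wt_tauIdx {N : ℕ} {Q : AddSubgroup (Fin N → ℤ)} (a : JSet N Q) :
    wt (tauIdx a).1 = wt a.1 := by
  simp only [tauIdx, wt, Units.val_neg, Pi.single_neg]
  abel

lemma tauIdx_tauIdx {N : ℕ} {Q : AddSubgroup (Fin N → ℤ)} (a : JSet N Q) :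
    tauIdx (tauIdx a) = a := by
  apply Subtype.ext
  obtain ⟨⟨r, i, s, j⟩, h⟩ := a
  simp [tauIdx]

lemma sgn_tauIdx {N : ℕ} {Q : AddSubgroup (Fin N → ℤ)} (a : JSet N Q) :
    sgn (tauIdx a) = sgn a := by
  simp only [sgn, tauIdx]
  by_cases h : a.1.i = a.1.j <;> simp [h, eq_comm]

lemma gTau_single {N : ℕ} {Q : AddSubgroup (Fin N → ℤ)} (a : JSet N Q) (c : ℂ) :
    gTau (Finsupp.single a c) = Finsupp.single (tauIdx a) (c * sgn a) := by
  rw [gTau, Finsupp.sum_single_index (by simp)]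
  erw [Finsupp.smul_single', mul_one]
  rfl

lemma gTau_zero {N : ℕ} {Q : AddSubgroup (Fin N → ℤ)} :
    gTau (0 : GAlg N Q) = 0 := by
  simp [gTau]

lemma gTau_add {N : ℕ} {Q : AddSubgroup (Fin N → ℤ)} (x y : GAlg N Q) :
    gTau (x + y) = gTau x + gTau y := by
  rw [gTau, gTau, gTau]
  exact Finsupp.sum_add_index' (by intro a; simp) (by intro a c1 c2; rw [add_mul, add_smul])

lemma gTau_smul {N : ℕ} {Q : AddSubgroup (Fin N → ℤ)} (c : ℂ) (x : GAlg N Q) :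
    gTau (c • x) = c • gTau x := by
  rw [gTau, gTau, Finsupp.sum_smul_index' (by intro a; simp), Finsupp.smul_sum]
  congr 1; funext a ca
  simp [smul_smul, mul_assoc]

lemma gMul_single_single {N : ℕ} {Q : AddSubgroup (Fin N → ℤ)}
    (ε : (Fin N → ℤ) → (Fin N → ℤ) → ℂ) (a b : JSet N Q) (ca cb : ℂ) :
    gMul ε (Finsupp.single a ca) (Finsupp.single b cb) = (ca * cb) • mulBasis ε a b := by
  rw [gMul, Finsupp.sum_single_index (by simp [Finsupp.sum]),
    Finsupp.sum_single_index (by simp)]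

lemma gMul_zero_left {N : ℕ} {Q : AddSubgroup (Fin N → ℤ)}
    (ε : (Fin N → ℤ) → (Fin N → ℤ) → ℂ) (y : GAlg N Q) :
    gMul ε 0 y = 0 := by simp [gMul]

lemma gMul_zero_right {N : ℕ} {Q : AddSubgroup (Fin N → ℤ)}
    (ε : (Fin N → ℤ) → (Fin N → ℤ) → ℂ) (x : GAlg N Q) :
    gMul ε x 0 = 0 := by simp [gMul]

lemma gMul_add_left {N : ℕ} {Q : AddSubgroup (Fin N → ℤ)}
    (ε : (Fin N → ℤ) → (Fin N → ℤ) → ℂ) (x1 x2 y : GAlg N Q) :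
    gMul ε (x1 + x2) y = gMul ε x1 y + gMul ε x2 y := by
  rw [gMul, gMul, gMul]
  refine Finsupp.sum_add_index' (by intro a; simp) ?_
  intro a c1 c2
  rw [← Finsupp.sum_add]
  congr 1; funext b cb
  simp [add_mul, add_smul]

lemma gMul_add_right {N : ℕ} {Q : AddSubgroup (Fin N → ℤ)}
    (ε : (Fin N → ℤ) → (Fin N → ℤ) → ℂ) (x y1 y2 : GAlg N Q) :
    gMul ε x (y1 + y2) = gMul ε x y1 + gMul ε x y2 := by
  rw [gMul, gMul, gMul, ← Finsupp.sum_add]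
  congr 1; funext a ca
  exact Finsupp.sum_add_index' (by intro b; simp) (by intro b c1 c2; simp [mul_add, add_smul])

lemma mulBasis_tau {N : ℕ} {Q : AddSubgroup (Fin N → ℤ)}
    (ε : (Fin N → ℤ) → (Fin N → ℤ) → ℂ)
    (hcomm : ∀ α ∈ Q, ∀ β ∈ Q, ε α β = (-1 : ℂ) ^ form α β * ε β α)
    (a b : JSet N Q) :
    gTau (mulBasis ε a b) = (sgn a * sgn b) • mulBasis ε (tauIdx b) (tauIdx a) := by
  by_cases h : a.1.σ = b.1.ρ ∧ a.1.j = b.1.i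
  · rw [mulBasis, dif_pos h]
    erw [Finsupp.smul_single', mul_one, gTau_single]
    rw [mulBasis, dif_pos ⟨by show -b.1.ρ = -a.1.σ; rw [h.1], h.2.symm⟩]
    erw [Finsupp.smul_single', mul_one, Finsupp.smul_single']
    congr 1
    rw [wt_tauIdx, wt_tauIdx, hcomm _ a.2 _ b.2]
    have hs := sign_id a.1 b.1 h.1 h.2
    simp only [sgn]
    linear_combination ε (wt b.1) (wt a.1) * hs
  · rw [mulBasis, dif_neg h, gTau_zero, mulBasis,
      dif_neg (fun hc => h ⟨(neg_injective hc.1).symm, hc.2.symm⟩), smul_zero]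

/-- The map `τ` is an anti-involution of the associative algebra `G(Q)`:
`τ(xy) = τ(y)τ(x)` and `τ² = Id`. -/
theorem gTau_antiInvolution (N : ℕ) (Q : AddSubgroup (Fin N → ℤ))
    (hQeven : ∀ α ∈ Q, Even (form α α))
    (ε : (Fin N → ℤ) → (Fin N → ℤ) → ℂ)
    (hεne : ∀ α ∈ Q, ∀ β ∈ Q, ε α β ≠ 0)
    (hcoc : ∀ α ∈ Q, ∀ β ∈ Q, ∀ γ ∈ Q,
      ε α β * ε (α + β) γ = ε β γ * ε α (β + γ))
    (hnorm : ε 0 0 = 1)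
    (hcomm : ∀ α ∈ Q, ∀ β ∈ Q, ε α β = (-1 : ℂ) ^ form α β * ε β α) :
    (∀ x y : GAlg N Q, gTau (gMul ε x y) = gMul ε (gTau y) (gTau x)) ∧
      (∀ x : GAlg N Q, gTau (gTau x) = x) := by
  constructor
  · intro x y
    induction x using Finsupp.induction with
    | zero => simp [gMul_zero_left, gTau_zero, gMul_zero_right]
    | single_add a c f _ _ ih =>
      rw [gMul_add_left, gTau_add, ih, gTau_add, gMul_add_right]
      congr 1
      clear ih
      induction y using Finsupp.induction with
      | zero => simp [gMul_zero_right, gTau_zero, gMul_zero_left]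
      | single_add b cb g _ _ ihy =>
        rw [gMul_add_right, gTau_add, ihy, gTau_add, gMul_add_left]
        congr 1
        rw [gMul_single_single, gTau_smul, mulBasis_tau ε hcomm, gTau_single, gTau_single,
          gMul_single_single, smul_smul]
        congr 1
        ring
  · intro x
    induction x using Finsupp.induction with
    | zero => simp [gTau_zero]
    | single_add a c f _ _ ih =>
      rw [gTau_add, gTau_add, ih, gTau_single, gTau_single, tauIdx_tauIdx, sgn_tauIdx,
        mul_assoc, sgn_mul_self, mul_one]
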